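/- Let n ∈ ℝ³ with ‖n‖ = 1 and 0 < α < 1, and set q = αn. Then for every x ∈ S²: ⟨n, φ_q(x)⟩ > α if and only if ⟨n, x⟩ > −α; ⟨n, φ_q(x)⟩ = α if and only if ⟨n, x⟩ = −α; and ⟨n, φ_q(x)⟩ < α if and only if ⟨n, x⟩ < −α. That is, φ_q contracts the spherical cap {x ∈ S² : ⟨n,x⟩ > −α} onto the cap {x ∈ S² : ⟨n,x⟩ > α}, expands the complementary cap {⟨n,x⟩ < −α} onto {⟨n,x⟩ < α}, and maps the critical circle ⟨n,x⟩ = −α onto the circle ⟨n,x⟩ = α. -/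

import Mathlib

noncomputable def phiMap (q p : EuclideanSpace ℝ (Fin 3)) : EuclideanSpace ℝ (Fin 3) :=
  (1 + ‖q‖ ^ 2 + 2 * (inner ℝ q p : ℝ))⁻¹ •
    ((1 - ‖q‖ ^ 2) • p + (2 * (1 + (inner ℝ q p : ℝ))) • q)

lemma phi_norm (q p : EuclideanSpace ℝ (Fin 3)) (hq : ‖q‖ < 1) (hp : ‖p‖ = 1) :
    ‖phiMap q p‖ = 1 := by
  set s : ℝ := inner ℝ q p with hs
  have hcs : |s| ≤ ‖q‖ := by
    calc |s| ≤ ‖q‖ * ‖p‖ := abs_real_inner_le_norm q p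
    _ = ‖q‖ := by rw [hp, mul_one]
  have hD : (0:ℝ) < 1 + ‖q‖ ^ 2 + 2 * s := by
    nlinarith [abs_le.mp hcs, norm_nonneg q]
  have hsq : ‖phiMap q p‖ ^ 2 = 1 := by
    rw [phiMap, norm_smul, norm_inv]
    rw [mul_pow, inv_pow]
    have hexp : ‖(1 - ‖q‖ ^ 2) • p + (2 * (1 + s)) • q‖ ^ 2
        = (1 + ‖q‖ ^ 2 + 2 * s) ^ 2 := by
      rw [← real_inner_self_eq_norm_sq]
      have hpq : (inner ℝ p q : ℝ) = s := by rw [hs]; exact real_inner_comm q p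
      simp only [inner_add_left, inner_add_right, inner_smul_left, inner_smul_right,
        real_inner_self_eq_norm_sq, conj_trivial, hpq, ← hs]
      rw [hp]; ring
    rw [← hs, hexp, Real.norm_eq_abs, sq_abs, inv_mul_cancel₀ (by positivity)]
  nlinarith [norm_nonneg (phiMap q p)]

lemma phi_inv (q p : EuclideanSpace ℝ (Fin 3)) (hq : ‖q‖ < 1) (hp : ‖p‖ = 1) :
    phiMap q (phiMap (-q) p) = p := by
  set s : ℝ := inner ℝ q p with hs
  have hcs : |s| ≤ ‖q‖ := by
    calc |s| ≤ ‖q‖ * ‖p‖ := abs_real_inner_le_norm q p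
    _ = ‖q‖ := by rw [hp, mul_one]
  have hQ1 : ‖q‖ ^ 2 < 1 := by nlinarith [norm_nonneg q]
  have h1Q : (1 : ℝ) - ‖q‖ ^ 2 ≠ 0 := by nlinarith
  have hE : (0:ℝ) < 1 + ‖q‖ ^ 2 - 2 * s := by
    nlinarith [abs_le.mp hcs, norm_nonneg q]
  have hE' : (1:ℝ) + ‖q‖ ^ 2 - 2 * s ≠ 0 := ne_of_gt hE
  have hx : phiMap (-q) p = (1 + ‖q‖ ^ 2 - 2 * s)⁻¹ •
      ((1 - ‖q‖ ^ 2) • p - (2 * (1 - s)) • q) := by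
    rw [phiMap]
    simp only [norm_neg, inner_neg_left, ← hs]
    match_scalars <;> ring
  have hqx : (inner ℝ q (phiMap (-q) p) : ℝ) =
      (1 + ‖q‖ ^ 2 - 2 * s)⁻¹ * ((1 - ‖q‖ ^ 2) * s - 2 * (1 - s) * ‖q‖ ^ 2) := by
    rw [hx]
    simp only [inner_smul_right, inner_sub_right, real_inner_self_eq_norm_sq, ← hs]
    try ring
  have hD' : (1:ℝ) + ‖q‖ ^ 2 + 2 * (inner ℝ q (phiMap (-q) p) : ℝ) =
      (1 + ‖q‖ ^ 2 - 2 * s)⁻¹ * (1 - ‖q‖ ^ 2) ^ 2 := by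
    rw [hqx]; field_simp; ring
  rw [phiMap, hD', hqx, hx]
  match_scalars <;> (field_simp; try ring)

theorem phi_contracts_caps (n : EuclideanSpace ℝ (Fin 3)) (hn : ‖n‖ = 1)
    (α : ℝ) (hα0 : 0 < α) (hα1 : α < 1) :
    (∀ x : EuclideanSpace ℝ (Fin 3), ‖x‖ = 1 →
      ((α < (inner ℝ n (phiMap (α • n) x) : ℝ) ↔ -α < (inner ℝ n x : ℝ)) ∧
       ((inner ℝ n (phiMap (α • n) x) : ℝ) = α ↔ (inner ℝ n x : ℝ) = -α) ∧
       ((inner ℝ n (phiMap (α • n) x) : ℝ) < α ↔ (inner ℝ n x : ℝ) < -α))) ∧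
    phiMap (α • n) '' {x : EuclideanSpace ℝ (Fin 3) | ‖x‖ = 1 ∧ -α < (inner ℝ n x : ℝ)} =
      {x : EuclideanSpace ℝ (Fin 3) | ‖x‖ = 1 ∧ α < (inner ℝ n x : ℝ)} ∧
    phiMap (α • n) '' {x : EuclideanSpace ℝ (Fin 3) | ‖x‖ = 1 ∧ (inner ℝ n x : ℝ) < -α} =
      {x : EuclideanSpace ℝ (Fin 3) | ‖x‖ = 1 ∧ (inner ℝ n x : ℝ) < α} ∧
    phiMap (α • n) '' {x : EuclideanSpace ℝ (Fin 3) | ‖x‖ = 1 ∧ (inner ℝ n x : ℝ) = -α} =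
      {x : EuclideanSpace ℝ (Fin 3) | ‖x‖ = 1 ∧ (inner ℝ n x : ℝ) = α} := by
  have hqn : ‖α • n‖ = α := by
    rw [norm_smul, hn, mul_one, Real.norm_eq_abs, abs_of_pos hα0]
  have hq' : ‖α • n‖ < 1 := by rw [hqn]; exact hα1
  have key : ∀ x : EuclideanSpace ℝ (Fin 3), ‖x‖ = 1 →
      ((α < (inner ℝ n (phiMap (α • n) x) : ℝ) ↔ -α < (inner ℝ n x : ℝ)) ∧
       ((inner ℝ n (phiMap (α • n) x) : ℝ) = α ↔ (inner ℝ n x : ℝ) = -α) ∧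
       ((inner ℝ n (phiMap (α • n) x) : ℝ) < α ↔ (inner ℝ n x : ℝ) < -α)) := by
    intro x hx
    set t : ℝ := inner ℝ n x with ht
    have hct : |t| ≤ 1 := by
      calc |t| ≤ ‖n‖ * ‖x‖ := abs_real_inner_le_norm n x
      _ = 1 := by rw [hn, hx, mul_one]
    have hqx : (inner ℝ (α • n) x : ℝ) = α * t := by
      rw [real_inner_smul_left, ht]
    have hD : (0:ℝ) < 1 + α ^ 2 + 2 * (α * t) := by nlinarith [abs_le.mp hct]
    set c : ℝ := (1 + α ^ 2 + 2 * (α * t))⁻¹ * (1 - α ^ 2) with hc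
    have hcpos : 0 < c := by
      apply mul_pos (inv_pos.mpr hD); nlinarith
    have hI : (inner ℝ n (phiMap (α • n) x) : ℝ) = α + c * (t + α) := by
      rw [phiMap, hqn, hqx]
      simp only [inner_smul_right, inner_add_right, real_inner_self_eq_norm_sq, ← ht]
      rw [hn, hc]
      field_simp
      rw [div_eq_iff (ne_of_gt (by linarith)), add_mul, div_mul_cancel₀ _ (ne_of_gt (by linarith))]; ring
    rw [hI]
    refine ⟨⟨fun h => ?_, fun h => ?_⟩, ⟨fun h => ?_, fun h => ?_⟩, fun h => ?_, fun h => ?_⟩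
    · nlinarith
    · nlinarith
    · have h2 : c * (t + α) = 0 := by linarith
      rcases mul_eq_zero.mp h2 with h3 | h3
      · exact absurd h3 (ne_of_gt hcpos)
      · linarith
    · rw [h]; ring
    · nlinarith
    · nlinarith
  refine ⟨key, ?_, ?_, ?_⟩ <;> ext y <;>
    simp only [Set.mem_image, Set.mem_setOf_eq] <;>
    constructor
  · rintro ⟨x, ⟨hx1, hx2⟩, rfl⟩
    exact ⟨phi_norm _ _ hq' hx1, ((key x hx1).1).mpr hx2⟩
  · rintro ⟨hy1, hy2⟩
    have hnx : ‖phiMap (-(α • n)) y‖ = 1 := phi_norm _ _ (by rwa [norm_neg]) hy1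
    have hfix : phiMap (α • n) (phiMap (-(α • n)) y) = y := phi_inv _ _ hq' hy1
    refine ⟨phiMap (-(α • n)) y, ⟨hnx, ?_⟩, hfix⟩
    exact ((key _ hnx).1).mp (by rwa [hfix])
  · rintro ⟨x, ⟨hx1, hx2⟩, rfl⟩
    exact ⟨phi_norm _ _ hq' hx1, ((key x hx1).2.2).mpr hx2⟩
  · rintro ⟨hy1, hy2⟩
    have hnx : ‖phiMap (-(α • n)) y‖ = 1 := phi_norm _ _ (by rwa [norm_neg]) hy1
    have hfix : phiMap (α • n) (phiMap (-(α • n)) y) = y := phi_inv _ _ hq' hy1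
    refine ⟨phiMap (-(α • n)) y, ⟨hnx, ?_⟩, hfix⟩
    exact ((key _ hnx).2.2).mp (by rwa [hfix])
  · rintro ⟨x, ⟨hx1, hx2⟩, rfl⟩
    exact ⟨phi_norm _ _ hq' hx1, ((key x hx1).2.1).mpr hx2⟩
  · rintro ⟨hy1, hy2⟩
    have hnx : ‖phiMap (-(α • n)) y‖ = 1 := phi_norm _ _ (by rwa [norm_neg]) hy1
    have hfix : phiMap (α • n) (phiMap (-(α • n)) y) = y := phi_inv _ _ hq' hy1
    refine ⟨phiMap (-(α • n)) y, ⟨hnx, ?_⟩, hfix⟩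
    exact ((key _ hnx).2.1).mp (by rwa [hfix])
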